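/- Let 0 < ε < 1/100. In the two-stage stochastic makespan problem, let OPT denote the optimal expected makespan and let T be a real number with OPT ≤ T < (1+ε)·OPT. Then there exists a first-stage assignment of the jobs to the m bags in which every nonempty bag has total job size in the closed interval [ε·T, (1+ε)·T], and whose expected makespan cost is at most (1+3ε)·T. -/

import Mathlib

noncomputable def machineLoad {n m k : ℕ} (p : Fin n → ℝ) (σ₁ : Fin n → Fin m)
    (σ₂ : Fin m → Fin k) (i : Fin k) : ℝ :=
  ∑ j ∈ Finset.univ.filter (fun j => σ₂ (σ₁ j) = i), p j

noncomputable def makespan {n m k : ℕ} (p : Fin n → ℝ) (σ₁ : Fin n → Fin m)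
    (σ₂ : Fin m → Fin k) : ℝ :=
  ⨆ i : Fin k, machineLoad p σ₁ σ₂ i

noncomputable def scenarioCost {n m : ℕ} (p : Fin n → ℝ) (σ₁ : Fin n → Fin m) (k : ℕ) : ℝ :=
  ⨅ σ₂ : Fin m → Fin k, makespan p σ₁ σ₂

noncomputable def expCost {n m : ℕ} (p : Fin n → ℝ) (q : Fin m → ℝ)
    (σ₁ : Fin n → Fin m) : ℝ :=
  ∑ k : Fin m, q k * scenarioCost p σ₁ (k.val + 1)

noncomputable def OPTval (n m : ℕ) (p : Fin n → ℝ) (q : Fin m → ℝ) : ℝ :=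
  ⨅ σ₁ : Fin n → Fin m, expCost p q σ₁

/-- Size of bag `b` under first-stage assignment `σ₁`. -/
noncomputable def bagSize {n m : ℕ} (p : Fin n → ℝ) (σ₁ : Fin n → Fin m) (b : Fin m) : ℝ :=
  ∑ j ∈ Finset.univ.filter (fun j => σ₁ j = b), p j

open Finset


section helpers

variable {n m : ℕ}

lemma bagSize_nonneg (p : Fin n → ℝ) (hp : ∀ j, 0 ≤ p j) (σ₁ : Fin n → Fin m) (b : Fin m) :
    0 ≤ bagSize p σ₁ b := Finset.sum_nonneg fun j _ => hp j

lemma machineLoad_nonneg {k : ℕ} (p : Fin n → ℝ) (hp : ∀ j, 0 ≤ p j) (σ₁ : Fin n → Fin m)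
    (σ₂ : Fin m → Fin k) (i : Fin k) : 0 ≤ machineLoad p σ₁ σ₂ i :=
  Finset.sum_nonneg fun j _ => hp j

lemma regroup {k : ℕ} (p : Fin n → ℝ) (σ₁ : Fin n → Fin m) (σ₂ : Fin m → Fin k) (i : Fin k) :
    machineLoad p σ₁ σ₂ i = ∑ b ∈ Finset.univ.filter (fun b => σ₂ b = i), bagSize p σ₁ b := by
  classical
  have h1 : ∀ b : Fin m,
      (if σ₂ b = i then ∑ j ∈ Finset.univ.filter (fun j => σ₁ j = b), p j else 0)
        = ∑ j ∈ Finset.univ.filter (fun j => σ₁ j = b),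
            (if σ₂ (σ₁ j) = i then p j else 0) := by
    intro b
    split_ifs with hb
    · exact Finset.sum_congr rfl fun j hj =>
        (if_pos (by rw [(Finset.mem_filter.1 hj).2]; exact hb)).symm
    · exact (Finset.sum_eq_zero fun j hj =>
        (if_neg (by rw [(Finset.mem_filter.1 hj).2]; exact hb))).symm
  calc machineLoad p σ₁ σ₂ i
      = ∑ j : Fin n, if σ₂ (σ₁ j) = i then p j else 0 := Finset.sum_filter _ _
    _ = ∑ b : Fin m, ∑ j ∈ Finset.univ.filter (fun j => σ₁ j = b),
          (if σ₂ (σ₁ j) = i then p j else 0) := (Finset.sum_fiberwise _ _ _).symm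
    _ = ∑ b : Fin m, (if σ₂ b = i then bagSize p σ₁ b else 0) :=
        Finset.sum_congr rfl fun b _ => (h1 b).symm
    _ = ∑ b ∈ Finset.univ.filter (fun b => σ₂ b = i), bagSize p σ₁ b :=
        (Finset.sum_filter _ _).symm

lemma sum_machineLoad {k : ℕ} (p : Fin n → ℝ) (σ₁ : Fin n → Fin m) (σ₂ : Fin m → Fin k) :
    ∑ i : Fin k, machineLoad p σ₁ σ₂ i = ∑ j, p j := by
  classical
  simpa [machineLoad] using Finset.sum_fiberwise Finset.univ (fun j => σ₂ (σ₁ j)) p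

lemma bagSize_comp (p : Fin n → ℝ) (σ₁ : Fin n → Fin m) (f : Fin m → Fin m) (c : Fin m) :
    bagSize p (fun j => f (σ₁ j)) c = ∑ b ∈ Finset.univ.filter (fun b => f b = c), bagSize p σ₁ b :=
  regroup p σ₁ f c

lemma machineLoad_le_makespan {k : ℕ} (p : Fin n → ℝ) (σ₁ : Fin n → Fin m)
    (σ₂ : Fin m → Fin k) (i : Fin k) :
    machineLoad p σ₁ σ₂ i ≤ makespan p σ₁ σ₂ := by
  have : Nonempty (Fin k) := ⟨i⟩
  exact le_ciSup (Set.finite_range _).bddAbove i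

lemma scenarioCost_le_makespan {k : ℕ} (p : Fin n → ℝ) (σ₁ : Fin n → Fin m)
    (σ₂ : Fin m → Fin k) : scenarioCost p σ₁ k ≤ makespan p σ₁ σ₂ :=
  ciInf_le (Set.finite_range _).bddBelow σ₂

lemma exists_scenario (p : Fin n → ℝ) (σ₁ : Fin n → Fin m) (k : ℕ) :
    ∃ σ₂ : Fin m → Fin (k + 1), scenarioCost p σ₁ (k + 1) = makespan p σ₁ σ₂ := by
  obtain ⟨σ₂, h⟩ := Finite.exists_min (fun σ₂ : Fin m → Fin (k + 1) => makespan p σ₁ σ₂)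
  exact ⟨σ₂, le_antisymm (scenarioCost_le_makespan p σ₁ σ₂) (le_ciInf h)⟩

lemma bagSize_le_scenarioCost (p : Fin n → ℝ) (hp : ∀ j, 0 ≤ p j) (σ₁ : Fin n → Fin m)
    (b : Fin m) (k : ℕ) : bagSize p σ₁ b ≤ scenarioCost p σ₁ (k + 1) := by
  classical
  obtain ⟨σ₂, h⟩ := exists_scenario p σ₁ k
  rw [h]
  refine le_trans ?_ (machineLoad_le_makespan p σ₁ σ₂ (σ₂ b))
  apply Finset.sum_le_sum_of_subset_of_nonneg
  · intro j hj
    simp only [Finset.mem_filter, Finset.mem_univ, true_and] at hj ⊢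
    rw [hj]
  · intro j _ _
    exact hp j

lemma scenarioCost_nonneg (p : Fin n → ℝ) (hp : ∀ j, 0 ≤ p j) (σ₁ : Fin n → Fin m) (k : ℕ) :
    0 ≤ scenarioCost p σ₁ (k + 1) := by
  obtain ⟨σ₂, h⟩ := exists_scenario p σ₁ k
  rw [h]
  exact le_trans (machineLoad_nonneg p hp σ₁ σ₂ 0) (machineLoad_le_makespan p σ₁ σ₂ 0)

lemma sum_le_scenarioCost (p : Fin n → ℝ) (σ₁ : Fin n → Fin m) (k : ℕ) :
    ∑ j, p j ≤ (k + 1 : ℝ) * scenarioCost p σ₁ (k + 1) := by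
  obtain ⟨σ₂, h⟩ := exists_scenario p σ₁ k
  rw [h]
  calc ∑ j, p j = ∑ i : Fin (k + 1), machineLoad p σ₁ σ₂ i := (sum_machineLoad p σ₁ σ₂).symm
    _ ≤ ∑ _i : Fin (k + 1), makespan p σ₁ σ₂ :=
        Finset.sum_le_sum fun i _ => machineLoad_le_makespan p σ₁ σ₂ i
    _ = (k + 1 : ℝ) * makespan p σ₁ σ₂ := by
        rw [Finset.sum_const, Finset.card_univ, Fintype.card_fin, nsmul_eq_mul]
        push_cast
        ring

lemma exists_optassign (hm : 0 < m) (p : Fin n → ℝ) (q : Fin m → ℝ) :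
    ∃ σ : Fin n → Fin m, OPTval n m p q = expCost p q σ := by
  have : Nonempty (Fin m) := ⟨⟨0, hm⟩⟩
  obtain ⟨σ, h⟩ := Finite.exists_min (fun σ : Fin n → Fin m => expCost p q σ)
  exact ⟨σ, le_antisymm (ciInf_le (Set.finite_range _).bddBelow σ) (le_ciInf h)⟩

end helpers


lemma greedy {m kk : ℕ} (C D : ℝ) (a : Fin m → ℝ) (ha : ∀ b, 0 ≤ a b) :
    ∀ I : Finset (Fin m), (∀ b ∈ I, a b ≤ D) → ∀ L : Fin (kk + 1) → ℝ,
      (∀ i, L i ≤ C + D) →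
      ((∑ i, L i) + ∑ b ∈ I, a b ≤ (kk + 1 : ℝ) * C) →
      ∃ φ : Fin m → Fin (kk + 1),
        ∀ i, L i + ∑ b ∈ I.filter (fun b => φ b = i), a b ≤ C + D := by
  classical
  intro I
  induction I using Finset.induction_on with
  | empty =>
    intro _ L hL _
    exact ⟨fun _ => 0, fun i => by simpa using hL i⟩
  | insert b I hbI IH =>
    intro haD L hL hsum
    obtain ⟨i₀, hmin⟩ := Finite.exists_min L
    have hk1 : (0:ℝ) < (kk + 1 : ℝ) := by positivity
    have hLi₀ : L i₀ ≤ C := by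
      have h1 : (kk + 1 : ℝ) * L i₀ ≤ ∑ i, L i := by
        calc (kk + 1 : ℝ) * L i₀ = ∑ _i : Fin (kk + 1), L i₀ := by
              rw [Finset.sum_const, Finset.card_univ, Fintype.card_fin, nsmul_eq_mul]; push_cast; ring
          _ ≤ ∑ i, L i := Finset.sum_le_sum fun i _ => hmin i
      have h2 : (0:ℝ) ≤ ∑ b' ∈ insert b I, a b' := Finset.sum_nonneg fun b' _ => ha b'
      have h3 : (kk + 1 : ℝ) * L i₀ ≤ (kk + 1 : ℝ) * C := by linarith
      exact le_of_mul_le_mul_left h3 hk1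
    have habD : a b ≤ D := haD b (Finset.mem_insert_self b I)
    set L' := Function.update L i₀ (L i₀ + a b) with hL'def
    have hL' : ∀ i, L' i ≤ C + D := by
      intro i
      by_cases h : i = i₀
      · subst h; rw [hL'def, Function.update_self]; linarith
      · rw [hL'def, Function.update_of_ne h]; exact hL i
    have hsumL' : ∑ i, L' i = (∑ i, L i) + a b := by
      rw [hL'def, Finset.sum_update_of_mem (Finset.mem_univ i₀),
        Finset.sdiff_singleton_eq_erase, ← Finset.add_sum_erase _ L (Finset.mem_univ i₀)]
      ring
    have hsum' : (∑ i, L' i) + ∑ b' ∈ I, a b' ≤ (kk + 1 : ℝ) * C := by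
      rw [hsumL']
      rw [Finset.sum_insert hbI] at hsum
      linarith
    obtain ⟨φ', hφ'⟩ := IH (fun b' hb' => haD b' (Finset.mem_insert_of_mem hb')) L' hL' hsum'
    refine ⟨fun x => if x = b then i₀ else φ' x, fun i => ?_⟩
    have hIfilt : I.filter (fun x => (if x = b then i₀ else φ' x) = i)
        = I.filter (fun x => φ' x = i) :=
      Finset.filter_congr fun x hx => by rw [if_neg (by rintro rfl; exact hbI hx)]
    rw [Finset.filter_insert]
    by_cases hi : i = i₀
    · rw [if_pos (by simp [hi]), Finset.sum_insert (by simp [hbI]), hIfilt, hi]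
      have h := hφ' i₀
      rw [hL'def, Function.update_self] at h
      linarith
    · rw [if_neg (by simpa using Ne.symm hi), hIfilt]
      have h := hφ' i
      rw [hL'def, Function.update_of_ne hi] at h
      exact h


lemma grouping {m : ℕ} (β : Fin m → ℝ) (ε T : ℝ) (hεT : 0 < ε * T)
    (hβ : ∀ b, 0 ≤ β b) :
    ∀ S : Finset (Fin m), (∀ b ∈ S, β b < ε * T) →
    ∃ h : Fin m → Fin m,
      (∀ x, x ∉ S → h x = x) ∧
      (∀ x, x ∈ S → h x ∈ S) ∧
      (∀ x, h (h x) = h x) ∧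
      (∀ r, r ∈ S → h r = r →
        (∑ x ∈ S.filter (fun x => h x = r), β x) < 2 * (ε * T)) ∧
      (∀ r r', r ∈ S → h r = r → r' ∈ S → h r' = r' →
        (∑ x ∈ S.filter (fun x => h x = r), β x) < ε * T →
        (∑ x ∈ S.filter (fun x => h x = r'), β x) < ε * T → r = r') := by
  classical
  intro S
  induction S using Finset.strongInduction with
  | _ S IH =>
    intro hsmall
    by_cases htot : ∑ x ∈ S, β x < ε * T
    · rcases S.eq_empty_or_nonempty with rfl | ⟨s₀, hs₀⟩
      · exact ⟨id, fun _ _ => rfl, fun x hx => absurd hx (Finset.notMem_empty x),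
          fun _ => rfl, fun r hr => absurd hr (Finset.notMem_empty r),
          fun r r' hr => absurd hr (Finset.notMem_empty r)⟩
      · set h : Fin m → Fin m := fun x => if x ∈ S then s₀ else x with hdef
        have hval : ∀ x, x ∈ S → h x = s₀ := fun x hx => by rw [hdef]; exact if_pos hx
        have hval' : ∀ x, x ∉ S → h x = x := fun x hx => by rw [hdef]; exact if_neg hx
        refine ⟨h, hval', ?_, ?_, ?_, ?_⟩
        · intro x hx; rw [hval x hx]; exact hs₀
        · intro x
          by_cases hx : x ∈ S
          · rw [hval x hx, hval s₀ hs₀]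
          · rw [hval' x hx]; exact hval' x hx
        · intro r hr hrr
          have hrs : r = s₀ := by rw [hval r hr] at hrr; exact hrr.symm
          have hfil : S.filter (fun x => h x = r) = S :=
            Finset.filter_true_of_mem (fun x hx => by rw [hval x hx, hrs])
          rw [hfil]
          linarith
        · intro r r' hr hrr hr' hrr' _ _
          rw [hval r hr] at hrr; rw [hval r' hr'] at hrr'
          rw [← hrr, ← hrr']
    · push_neg at htot
      obtain ⟨S', hS'mem, hS'min⟩ := Finset.exists_minimal
        (s := (S.powerset).filter (fun A => ε * T ≤ ∑ x ∈ A, β x))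
        ⟨S, by simp [htot]⟩
      rw [Finset.mem_filter, Finset.mem_powerset] at hS'mem
      obtain ⟨hS'sub, hS'sum⟩ := hS'mem
      have hS'ne : S'.Nonempty := by
        rcases S'.eq_empty_or_nonempty with rfl | h
        · simp at hS'sum; linarith
        · exact h
      obtain ⟨s₀, hs₀⟩ := hS'ne
      have hS'lt : ∑ x ∈ S', β x < 2 * (ε * T) := by
        have herase : ¬ (ε * T ≤ ∑ x ∈ S'.erase s₀, β x) := by
          intro hcon
          have hmem : S'.erase s₀ ∈ (S.powerset).filter (fun A => ε * T ≤ ∑ x ∈ A, β x) := by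
            rw [Finset.mem_filter, Finset.mem_powerset]
            exact ⟨(Finset.erase_subset _ _).trans hS'sub, hcon⟩
          exact (Finset.erase_ssubset hs₀).not_ge (hS'min hmem (Finset.erase_subset _ _))
        push_neg at herase
        have hsplit : β s₀ + ∑ x ∈ S'.erase s₀, β x = ∑ x ∈ S', β x :=
          Finset.add_sum_erase _ _ hs₀
        have hs₀lt : β s₀ < ε * T := hsmall s₀ (hS'sub hs₀)
        linarith
      set Q := S \ S' with hQdef
      have hQss : Q ⊂ S := Finset.sdiff_ssubset hS'sub ⟨s₀, hs₀⟩
      obtain ⟨h', p1, p2, p3, p4, p5⟩ := IH Q hQss (fun b hb => hsmall b (Finset.mem_sdiff.1 hb).1)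
      have hs₀S : s₀ ∈ S := hS'sub hs₀
      have hnotS' : ∀ x, x ∉ S' → h' x ∉ S' := by
        intro x hx
        by_cases hxQ : x ∈ Q
        · have := p2 x hxQ; rw [hQdef, Finset.mem_sdiff] at this; exact this.2
        · rw [p1 x hxQ]
          intro hxs
          exact hxQ (by rw [hQdef, Finset.mem_sdiff]; exact ⟨hS'sub hxs, hx⟩)
      set h : Fin m → Fin m := fun x => if x ∈ S' then s₀ else h' x with hdef
      have hval : ∀ x, x ∈ S' → h x = s₀ := fun x hx => by rw [hdef]; exact if_pos hx
      have hval' : ∀ x, x ∉ S' → h x = h' x := fun x hx => by rw [hdef]; exact if_neg hx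
      -- the fiber of s₀ is S'
      have hfil₀ : S.filter (fun x => h x = s₀) = S' := by
        ext x
        simp only [Finset.mem_filter]
        constructor
        · rintro ⟨hxS, hx⟩
          by_contra hxn
          rw [hval' x hxn] at hx
          exact (hnotS' x hxn) (hx ▸ hs₀)
        · intro hx
          exact ⟨hS'sub hx, hval x hx⟩
      -- fibers of other points of S are fibers of h' in Q
      have hfilQ : ∀ r, r ∉ S' → S.filter (fun x => h x = r) = Q.filter (fun x => h' x = r) := by
        intro r hr'
        ext x
        simp only [Finset.mem_filter]
        constructor
        · rintro ⟨hxS, hx⟩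
          by_cases hx' : x ∈ S'
          · rw [hval x hx'] at hx
            exact absurd (hx ▸ hs₀) hr'
          · rw [hval' x hx'] at hx
            exact ⟨by rw [hQdef, Finset.mem_sdiff]; exact ⟨hxS, hx'⟩, hx⟩
        · rintro ⟨hxQ, hx⟩
          have hxS' : x ∉ S' := (Finset.mem_sdiff.1 (hQdef ▸ hxQ)).2
          exact ⟨(Finset.mem_sdiff.1 (hQdef ▸ hxQ)).1, by rw [hval' x hxS']; exact hx⟩
      refine ⟨h, ?_, ?_, ?_, ?_, ?_⟩
      · intro x hx
        have hx' : x ∉ S' := fun hc => hx (hS'sub hc)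
        rw [hval' x hx']
        exact p1 x (fun hc => hx (Finset.mem_sdiff.1 hc).1)
      · intro x hx
        by_cases hx' : x ∈ S'
        · rw [hval x hx']; exact hs₀S
        · rw [hval' x hx']
          have hxQ : x ∈ Q := by rw [hQdef, Finset.mem_sdiff]; exact ⟨hx, hx'⟩
          exact (Finset.mem_sdiff.1 (p2 x hxQ)).1
      · intro x
        by_cases hx : x ∈ S'
        · rw [hval x hx, hval s₀ hs₀]
        · rw [hval' x hx]
          have hne : h' x ∉ S' := hnotS' x hx
          rw [hval' _ hne]
          exact p3 x
      · intro r hr hrr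
        by_cases hr' : r ∈ S'
        · have hrs : r = s₀ := by rw [hval r hr'] at hrr; exact hrr.symm
          rw [hrs, hfil₀]
          exact hS'lt
        · rw [hval' r hr'] at hrr
          have hrQ : r ∈ Q := by rw [hQdef, Finset.mem_sdiff]; exact ⟨hr, hr'⟩
          rw [hfilQ r hr']
          exact p4 r hrQ hrr
      · intro r r' hr hrr hr' hrr' hsmall1 hsmall2
        have key : ∀ t, t ∈ S → h t = t →
            (∑ x ∈ S.filter (fun x => h x = t), β x) < ε * T →
            t ∈ Q ∧ h' t = t ∧ (∑ x ∈ Q.filter (fun x => h' x = t), β x) < ε * T := by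
          intro t ht htt hts
          by_cases ht' : t ∈ S'
          · exfalso
            have hts₀ : t = s₀ := by rw [hval t ht'] at htt; exact htt.symm
            rw [hts₀, hfil₀] at hts
            linarith
          · rw [hval' t ht'] at htt
            rw [hfilQ t ht'] at hts
            exact ⟨by rw [hQdef, Finset.mem_sdiff]; exact ⟨ht, ht'⟩, htt, hts⟩
        obtain ⟨hrQ, hrr2, hrs2⟩ := key r hr hrr hsmall1
        obtain ⟨hrQ', hrr2', hrs2'⟩ := key r' hr' hrr' hsmall2
        exact p5 r r' hrQ hrr2 hrQ' hrr2' hrs2 hrs2'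

set_option maxHeartbeats 1000000 in
theorem stmt2 (n m : ℕ) (hn : 0 < n) (hm : 2 ≤ m)
    (p : Fin n → ℝ) (hp : ∀ j, 0 < p j)
    (q : Fin m → ℝ) (hq : ∀ k, 0 ≤ q k) (hq1 : ∑ k, q k = 1)
    (ε T : ℝ) (hε : 0 < ε) (hε1 : ε < 1 / 100)
    (hT1 : OPTval n m p q ≤ T) (hT2 : T < (1 + ε) * OPTval n m p q) :
    ∃ σ₁ : Fin n → Fin m,
      (∀ b : Fin m, (∃ j, σ₁ j = b) →
        ε * T ≤ bagSize p σ₁ b ∧ bagSize p σ₁ b ≤ (1 + ε) * T) ∧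
      expCost p q σ₁ ≤ (1 + 3 * ε) * T := by

  classical
  have hm0 : 0 < m := by omega
  have _inst : Nonempty (Fin m) := ⟨⟨0, hm0⟩⟩
  obtain ⟨σs, hσs⟩ := exists_optassign hm0 p q
  have hp0 : ∀ j, 0 ≤ p j := fun j => (hp j).le
  set β := bagSize p σs with hβdef
  have hβ0 : ∀ b, 0 ≤ β b := fun b => bagSize_nonneg p hp0 σs b
  have hle_exp : ∀ (σ : Fin n → Fin m) (x : ℝ),
      (∀ k : Fin m, x ≤ scenarioCost p σ (k.1 + 1)) → x ≤ expCost p q σ := by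
    intro σ x hx
    calc x = ∑ k : Fin m, q k * x := by rw [← Finset.sum_mul, hq1, one_mul]
      _ ≤ ∑ k : Fin m, q k * scenarioCost p σ (k.1 + 1) :=
          Finset.sum_le_sum fun k _ => mul_le_mul_of_nonneg_left (hx k) (hq k)
      _ = expCost p q σ := rfl
  have hβT : ∀ b, β b ≤ T := by
    intro b
    refine le_trans (le_trans (hle_exp σs (β b)
      (fun k => bagSize_le_scenarioCost p hp0 σs b k.1)) ?_) hT1
    rw [hσs]
  have hscenP : ∀ (σ : Fin n → Fin m) (k : ℕ), scenarioCost p σ (k + 1) ≤ ∑ j, p j := by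
    intro σ k
    refine le_trans (scenarioCost_le_makespan p σ (fun _ => 0)) (ciSup_le fun i => ?_)
    exact Finset.sum_le_sum_of_subset_of_nonneg (Finset.filter_subset _ _) fun j _ _ => hp0 j
  have hOPT_P : OPTval n m p q ≤ ∑ j, p j := by
    rw [hσs]
    calc expCost p q σs ≤ ∑ k : Fin m, q k * (∑ j, p j) :=
          Finset.sum_le_sum fun k _ => mul_le_mul_of_nonneg_left (hscenP σs k.1) (hq k)
      _ = ∑ j, p j := by rw [← Finset.sum_mul, hq1, one_mul]
  have hj0 : (0:ℝ) < p ⟨0, hn⟩ := hp _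
  have hj0β : p ⟨0, hn⟩ ≤ β (σs ⟨0, hn⟩) := by
    rw [hβdef]
    exact Finset.single_le_sum (f := p) (fun j _ => hp0 j)
      (Finset.mem_filter.2 ⟨Finset.mem_univ _, rfl⟩)
  have hOPTpos : 0 < OPTval n m p q := by
    have h2 : β (σs ⟨0, hn⟩) ≤ OPTval n m p q := by
      rw [hσs]
      exact hle_exp σs _ fun k => bagSize_le_scenarioCost p hp0 σs _ k.1
    linarith
  have hTpos : 0 < T := lt_of_lt_of_le hOPTpos hT1
  have hεT : 0 < ε * T := mul_pos hε hTpos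
  have hP0 : 0 < ∑ j, p j :=
    lt_of_lt_of_le hj0 (Finset.single_le_sum (fun j _ => hp0 j) (Finset.mem_univ _))
  have hPgt : ε * T < ∑ j, p j := by
    have h1 : T < (1 + ε) * (∑ j, p j) :=
      lt_of_lt_of_le hT2 (mul_le_mul_of_nonneg_left hOPT_P (by linarith))
    nlinarith
  have hPβ : ∑ b : Fin m, β b = ∑ j, p j := by
    rw [hβdef]
    simp only [bagSize]
    exact Finset.sum_fiberwise _ _ _
  set S := Finset.univ.filter (fun b => 0 < β b ∧ β b < ε * T) with hSdef
  obtain ⟨h, g1, g2, g3, g4, g5⟩ := grouping β ε T hεT hβ0 S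
    (fun b hb => ((Finset.mem_filter.1 hb).2).2)
  set G := fun r => ∑ x ∈ S.filter (fun x => h x = r), β x with hGdef
  have hG0 : ∀ r, 0 ≤ G r := fun r => Finset.sum_nonneg fun x _ => hβ0 x
  have hfib_out : ∀ c, c ∉ S → Finset.univ.filter (fun b => h b = c) = {c} := by
    intro c hc
    ext b
    simp only [Finset.mem_filter, Finset.mem_univ, true_and, Finset.mem_singleton]
    constructor
    · intro hb
      by_cases hbS : b ∈ S
      · exact absurd (hb ▸ g2 b hbS) hc
      · rw [g1 b hbS] at hb; exact hb
    · intro hbc; rw [hbc]; exact g1 c hc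
  have hfib_rep : ∀ r, r ∈ S →
      Finset.univ.filter (fun b => h b = r) = S.filter (fun b => h b = r) := by
    intro r hr
    ext b
    simp only [Finset.mem_filter, Finset.mem_univ, true_and]
    constructor
    · intro hb
      refine ⟨?_, hb⟩
      by_cases hbS : b ∈ S
      · exact hbS
      · rw [g1 b hbS] at hb; exact hb ▸ hr
    · exact fun hb => hb.2
  have hfib_nonrep : ∀ c, c ∈ S → h c ≠ c →
      Finset.univ.filter (fun b => h b = c) = ∅ := by
    intro c hc hcc
    rw [Finset.eq_empty_iff_forall_notMem]
    intro b hb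
    simp only [Finset.mem_filter, Finset.mem_univ, true_and] at hb
    by_cases hbS : b ∈ S
    · have hg := g3 b; rw [hb] at hg; exact hcc hg
    · rw [g1 b hbS] at hb; exact hbS (hb ▸ hc)
  have hout0 : ∀ b, b ∉ S → ¬ (ε * T ≤ β b) → β b = 0 := by
    intro b hb hb2
    by_contra hb0
    have hlt : β b < ε * T := by push_neg at hb2; exact hb2
    have : 0 < β b := lt_of_le_of_ne (hβ0 b) (Ne.symm hb0)
    exact hb (by rw [hSdef]; exact Finset.mem_filter.2 ⟨Finset.mem_univ _, this, hlt⟩)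
  obtain ⟨f, I, t, hF1, hF2, hF3⟩ :
      ∃ (f : Fin m → Fin m) (I : Finset (Fin m)) (t : Fin m),
        (∀ c, (∃ b, f b = c ∧ 0 < β b) →
          ε * T ≤ ∑ b ∈ Finset.univ.filter (fun b => f b = c), β b ∧
          ∑ b ∈ Finset.univ.filter (fun b => f b = c), β b ≤ (1 + ε) * T) ∧
        (∀ c, c ∉ I →
          ∑ b ∈ Finset.univ.filter (fun b => f b = c), β b
            ≤ β c + (if c = t then ε * T else 0)) ∧
        (∀ r ∈ I, ∑ b ∈ Finset.univ.filter (fun b => f b = r), β b ≤ 3 * (ε * T)) := by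
    by_cases hlo : ∃ r, r ∈ S ∧ h r = r ∧ G r < ε * T
    · -- leftover case
      obtain ⟨r₀, hr₀S, hr₀rep, hr₀small⟩ := hlo
      have htgt : ∃ t, t ≠ r₀ ∧
          ((ε * T ≤ β t ∧ t ∉ S) ∨ (t ∈ S ∧ h t = t ∧ t ≠ r₀ ∧ ε * T ≤ G t)) := by
        by_cases hbig : ∃ t, ε * T ≤ β t
        · obtain ⟨t, ht⟩ := hbig
          have htS : t ∉ S := by
            intro hc
            have := ((Finset.mem_filter.1 hc).2).2
            linarith
          exact ⟨t, fun hc => htS (hc ▸ hr₀S), Or.inl ⟨ht, htS⟩⟩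
        · by_cases hrep2 : ∃ r₁, r₁ ∈ S ∧ h r₁ = r₁ ∧ r₁ ≠ r₀
          · obtain ⟨r₁, hr₁S, hr₁rep, hr₁ne⟩ := hrep2
            have hG1 : ε * T ≤ G r₁ := by
              by_contra hc
              push_neg at hc
              exact hr₁ne (g5 r₁ r₀ hr₁S hr₁rep hr₀S hr₀rep hc hr₀small)
            exact ⟨r₁, hr₁ne, Or.inr ⟨hr₁S, hr₁rep, hr₁ne, hG1⟩⟩
          · exfalso
            push_neg at hbig hrep2
            have hsum2 : ∑ b : Fin m, β b = ∑ b ∈ S, β b := by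
              refine (Finset.sum_subset (Finset.subset_univ S) fun b _ hb => ?_).symm
              exact hout0 b hb (by push_neg; exact hbig b)
            have hsum3 : ∑ b ∈ S, β b
                = ∑ r : Fin m, ∑ x ∈ S.filter (fun x => h x = r), β x :=
              (Finset.sum_fiberwise _ _ _).symm
            have hsum4 : ∀ r, r ≠ r₀ → ∑ x ∈ S.filter (fun x => h x = r), β x = 0 := by
              intro r hr
              have hemp : S.filter (fun x => h x = r) = ∅ := by
                rw [Finset.eq_empty_iff_forall_notMem]
                intro x hx
                obtain ⟨hxS, hxr⟩ := Finset.mem_filter.1 hx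
                have hrS : r ∈ S := hxr ▸ g2 x hxS
                have hrr : h r = r := by have hg := g3 x; rw [hxr] at hg; exact hg
                exact hr (hrep2 r hrS hrr)
              rw [hemp, Finset.sum_empty]
            have hsum5 : ∑ r : Fin m, ∑ x ∈ S.filter (fun x => h x = r), β x = G r₀ := by
              rw [hGdef]
              exact Finset.sum_eq_single r₀ (fun r _ hr => hsum4 r hr)
                (fun hc => absurd (Finset.mem_univ r₀) hc)
            rw [hsum5] at hsum3
            rw [hsum3] at hsum2
            rw [hsum2] at hPβ
            linarith
      obtain ⟨t, htne, htcase⟩ := htgt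
      have hffib_r₀ : Finset.univ.filter
          (fun b => (if h b = r₀ then t else h b) = r₀) = ∅ := by
        rw [Finset.eq_empty_iff_forall_notMem]
        intro b hb
        simp only [Finset.mem_filter, Finset.mem_univ, true_and] at hb
        by_cases hbr : h b = r₀
        · rw [if_pos hbr] at hb; exact htne hb
        · rw [if_neg hbr] at hb; exact hbr hb
      have hffib_ne : ∀ c, c ≠ t → c ≠ r₀ →
          Finset.univ.filter (fun b => (if h b = r₀ then t else h b) = c)
            = Finset.univ.filter (fun b => h b = c) := by
        intro c hct hcr
        ext b
        simp only [Finset.mem_filter, Finset.mem_univ, true_and]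
        constructor
        · intro hb
          by_cases hbr : h b = r₀
          · rw [if_pos hbr] at hb; exact absurd hb.symm hct
          · rw [if_neg hbr] at hb; exact hb
        · intro hb
          have hbr : h b ≠ r₀ := fun hc => hcr (by rw [← hb, hc])
          rw [if_neg hbr]; exact hb
      have hffib_t : Finset.univ.filter (fun b => (if h b = r₀ then t else h b) = t)
          = Finset.univ.filter (fun b => h b = t) ∪
            Finset.univ.filter (fun b => h b = r₀) := by
        ext b
        simp only [Finset.mem_filter, Finset.mem_univ, true_and, Finset.mem_union]
        constructor
        · intro hb
          by_cases hbr : h b = r₀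
          · exact Or.inr hbr
          · rw [if_neg hbr] at hb; exact Or.inl hb
        · intro hb
          rcases hb with hb | hb
          · have hbr : h b ≠ r₀ := fun hc => htne (by rw [← hb, hc])
            rw [if_neg hbr]; exact hb
          · rw [if_pos hb]
      have hdisj : Disjoint (Finset.univ.filter (fun b => h b = t))
          (Finset.univ.filter (fun b => h b = r₀)) := by
        rw [Finset.disjoint_left]
        intro b hb1 hb2
        simp only [Finset.mem_filter, Finset.mem_univ, true_and] at hb1 hb2
        exact htne (by rw [← hb1, hb2])
      have hst : ∑ b ∈ Finset.univ.filter (fun b => (if h b = r₀ then t else h b) = t), β b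
          = (∑ b ∈ Finset.univ.filter (fun b => h b = t), β b) + G r₀ := by
        rw [hffib_t, Finset.sum_union hdisj, hGdef]
        congr 1
        rw [hfib_rep r₀ hr₀S]
      refine ⟨fun b => if h b = r₀ then t else h b,
        (S.filter (fun r => h r = r)).erase r₀, t, ?_, ?_, ?_⟩
      · intro c hc
        obtain ⟨b, hfb, hb0⟩ := hc
        change (if h b = r₀ then t else h b) = c at hfb
        by_cases hct : c = t
        · rw [hct, hst]
          rcases htcase with ⟨htβ, htS⟩ | ⟨htS, htrep, htne2, htG⟩
          · rw [hfib_out t htS, Finset.sum_singleton]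
            constructor
            · have := hG0 r₀; linarith
            · have := hβT t; nlinarith
          · rw [hfib_rep t htS]
            have hGt2 : G t < 2 * (ε * T) := g4 t htS htrep
            constructor
            · have := hG0 r₀
              have : (G t) + G r₀ ≥ ε * T := by linarith [htG, hG0 r₀]
              rw [hGdef]
              exact this
            · rw [hGdef] at hGt2 ⊢
              nlinarith [hr₀small]
        · by_cases hcr : c = r₀
          · exfalso
            by_cases hbr : h b = r₀
            · rw [if_pos hbr] at hfb; exact htne (hfb.trans hcr)
            · rw [if_neg hbr] at hfb; exact hbr (hfb.trans hcr)
          · rw [hffib_ne c hct hcr]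
            have hfb' : h b = c := by
              by_cases hbr : h b = r₀
              · rw [if_pos hbr] at hfb; exact absurd hfb.symm hct
              · rw [if_neg hbr] at hfb; exact hfb
            by_cases hcS : c ∈ S
            · have hrep : h c = c := by
                have hg := g3 b; rw [hfb'] at hg; exact hg
              rw [hfib_rep c hcS]
              have hGc : ε * T ≤ G c := by
                by_contra hcon
                push_neg at hcon
                exact hcr (g5 c r₀ hcS hrep hr₀S hr₀rep hcon hr₀small)
              have hGc2 : G c < 2 * (ε * T) := g4 c hcS hrep
              rw [hGdef] at hGc hGc2
              exact ⟨hGc, by nlinarith⟩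
            · have hbc : b = c := by
                by_cases hbS : b ∈ S
                · exact absurd (hfb' ▸ g2 b hbS) hcS
                · rw [g1 b hbS] at hfb'; exact hfb'
              rw [hfib_out c hcS, Finset.sum_singleton]
              have hc0 : 0 < β c := hbc ▸ hb0
              have hcge : ¬ (β c < ε * T) := by
                intro hlt
                refine hcS ?_
                rw [hSdef]
                exact Finset.mem_filter.2 ⟨Finset.mem_univ _, hc0, hlt⟩
              push_neg at hcge
              exact ⟨hcge, by nlinarith [hβT c]⟩
      · intro c hcI
        by_cases hct : c = t
        · rw [hct, hst, if_pos rfl]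
          rcases htcase with ⟨htβ, htS⟩ | ⟨htS, htrep, htne2, htG⟩
          · rw [hfib_out t htS, Finset.sum_singleton]
            linarith [hr₀small]
          · exfalso
            apply hcI
            rw [hct]
            exact Finset.mem_erase.2 ⟨htne2,
              Finset.mem_filter.2 ⟨htS, htrep⟩⟩
        · rw [if_neg hct]
          by_cases hcr : c = r₀
          · rw [hcr, hffib_r₀, Finset.sum_empty]
            simpa using hβ0 r₀
          · rw [hffib_ne c hct hcr]
            by_cases hcS : c ∈ S
            · have hcc : h c ≠ c := by
                intro hrep
                exact hcI (Finset.mem_erase.2 ⟨hcr, Finset.mem_filter.2 ⟨hcS, hrep⟩⟩)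
              rw [hfib_nonrep c hcS hcc, Finset.sum_empty]
              simpa using hβ0 c
            · rw [hfib_out c hcS, Finset.sum_singleton]
              simp
      · intro r hrI
        obtain ⟨hrne, hrmem⟩ := Finset.mem_erase.1 hrI
        obtain ⟨hrS, hrrep⟩ := Finset.mem_filter.1 hrmem
        by_cases hrt : r = t
        · rw [hrt, hst]
          rcases htcase with ⟨htβ, htS⟩ | ⟨htS, htrep, htne2, htG⟩
          · exact absurd (hrt ▸ hrS) htS
          · rw [hfib_rep t htS]
            have hGt2 : G t < 2 * (ε * T) := g4 t htS htrep
            rw [hGdef] at hGt2 ⊢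
            linarith [hr₀small]
        · rw [hffib_ne r hrt hrne, hfib_rep r hrS]
          have hGr : G r < 2 * (ε * T) := g4 r hrS hrrep
          rw [hGdef] at hGr
          linarith [hεT]
    · -- no leftover
      push_neg at hlo
      refine ⟨h, S.filter (fun r => h r = r), ⟨0, hm0⟩, ?_, ?_, ?_⟩
      · intro c hc
        obtain ⟨b, hfb, hb0⟩ := hc
        by_cases hcS : c ∈ S
        · have hrep : h c = c := by
            have hg := g3 b; rw [hfb] at hg; exact hg
          rw [hfib_rep c hcS]
          have hGc : ε * T ≤ G c := hlo c hcS hrep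
          have hGc2 : G c < 2 * (ε * T) := g4 c hcS hrep
          rw [hGdef] at hGc hGc2
          exact ⟨hGc, by nlinarith⟩
        · have hbc : b = c := by
            by_cases hbS : b ∈ S
            · exact absurd (hfb ▸ g2 b hbS) hcS
            · rw [g1 b hbS] at hfb; exact hfb
          rw [hfib_out c hcS, Finset.sum_singleton]
          have hc0 : 0 < β c := hbc ▸ hb0
          have hcge : ¬ (β c < ε * T) := by
            intro hlt
            refine hcS ?_
            rw [hSdef]
            exact Finset.mem_filter.2 ⟨Finset.mem_univ _, hc0, hlt⟩
          push_neg at hcge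
          exact ⟨hcge, by nlinarith [hβT c]⟩
      · intro c hcI
        by_cases hcS : c ∈ S
        · have hcc : h c ≠ c := by
            intro hrep
            exact hcI (Finset.mem_filter.2 ⟨hcS, hrep⟩)
          rw [hfib_nonrep c hcS hcc, Finset.sum_empty]
          have := hβ0 c
          split_ifs <;> linarith
        · rw [hfib_out c hcS, Finset.sum_singleton]
          split_ifs <;> linarith [hεT]
      · intro r hrI
        obtain ⟨hrS, hrrep⟩ := Finset.mem_filter.1 hrI
        rw [hfib_rep r hrS]
        have hGr : G r < 2 * (ε * T) := g4 r hrS hrrep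
        rw [hGdef] at hGr
        linarith [hεT]
  -- assemble the final assignment
  refine ⟨fun j => f (σs j), ?_, ?_⟩
  · intro c hc
    obtain ⟨j, hj⟩ := hc
    have hwit : ∃ b, f b = c ∧ 0 < β b := by
      refine ⟨σs j, hj, ?_⟩
      rw [hβdef]
      exact lt_of_lt_of_le (hp j) (Finset.single_le_sum (f := p) (fun j' _ => hp0 j')
        (Finset.mem_filter.2 ⟨Finset.mem_univ _, rfl⟩))
    have hb := hF1 c hwit
    rw [show bagSize p (fun j => f (σs j)) c
        = ∑ b ∈ Finset.univ.filter (fun b => f b = c), β b from bagSize_comp p σs f c]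
    exact hb
  · have hcost : ∀ k : Fin m, scenarioCost p (fun j => f (σs j)) (k.1 + 1)
        ≤ scenarioCost p σs (k.1 + 1) + 3 * (ε * T) := by
      intro k
      obtain ⟨σ₂, hσ₂⟩ := exists_scenario p σs k.1
      set C := scenarioCost p σs (k.1 + 1) with hCdef
      have hload : ∀ i, machineLoad p σs σ₂ i ≤ C := by
        intro i
        have hml := machineLoad_le_makespan p σs σ₂ i
        rw [← hσ₂] at hml
        exact hml
      have hPC : ∑ j, p j ≤ ((k.1 : ℝ) + 1) * C :=
        sum_le_scenarioCost p σs k.1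
      set s := fun c => ∑ b ∈ Finset.univ.filter (fun b => f b = c), β b with hsdef
      have hs0 : ∀ c, 0 ≤ s c := fun c => Finset.sum_nonneg fun b _ => hβ0 b
      set L := fun i : Fin (k.1 + 1) => ∑ c ∈ Iᶜ.filter (fun c => σ₂ c = i), s c with hLdef
      have hL : ∀ i, L i ≤ C + 3 * (ε * T) := by
        intro i
        have h1 : L i ≤ ∑ c ∈ Iᶜ.filter (fun c => σ₂ c = i),
            (β c + if c = t then ε * T else 0) := by
          refine Finset.sum_le_sum fun c hc => ?_
          exact hF2 c (Finset.mem_compl.1 (Finset.mem_of_mem_filter c hc))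
        have h2 : ∑ c ∈ Iᶜ.filter (fun c => σ₂ c = i),
            (β c + if c = t then ε * T else 0)
            = (∑ c ∈ Iᶜ.filter (fun c => σ₂ c = i), β c)
              + ∑ c ∈ Iᶜ.filter (fun c => σ₂ c = i), (if c = t then ε * T else 0) :=
          Finset.sum_add_distrib
        have h3 : ∑ c ∈ Iᶜ.filter (fun c => σ₂ c = i), (if c = t then ε * T else 0)
            ≤ ε * T := by
          rw [Finset.sum_ite_eq' _ t (fun _ => ε * T)]
          split_ifs <;> linarith
        have h4 : ∑ c ∈ Iᶜ.filter (fun c => σ₂ c = i), β c ≤ machineLoad p σs σ₂ i := by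
          rw [regroup p σs σ₂ i]
          refine Finset.sum_le_sum_of_subset_of_nonneg ?_ fun b _ _ => hβ0 b
          intro c hc
          exact Finset.mem_filter.2 ⟨Finset.mem_univ _, (Finset.mem_filter.1 hc).2⟩
        have h5 := hload i
        linarith
      have hsumL : (∑ i, L i) + ∑ b ∈ I, s b ≤ ((k.1 : ℝ) + 1) * C := by
        have e1 : ∑ i, L i = ∑ c ∈ Iᶜ, s c := by
          rw [hLdef]
          exact Finset.sum_fiberwise _ _ _
        have e2 : (∑ c ∈ Iᶜ, s c) + ∑ b ∈ I, s b = ∑ c : Fin m, s c := by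
          rw [add_comm]
          exact Finset.sum_add_sum_compl I s
        have e3 : ∑ c : Fin m, s c = ∑ b : Fin m, β b := by
          rw [hsdef]
          exact Finset.sum_fiberwise _ _ _
        rw [e1]
        rw [e2, e3, hPβ]
        exact hPC
      obtain ⟨φ, hφ⟩ := greedy C (3 * (ε * T)) s hs0 I hF3 L hL hsumL
      have hms : makespan p (fun j => f (σs j)) (fun c => if c ∈ I then φ c else σ₂ c)
          ≤ C + 3 * (ε * T) := by
        apply ciSup_le
        intro i
        have hre : machineLoad p (fun j => f (σs j)) (fun c => if c ∈ I then φ c else σ₂ c) i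
            = ∑ c ∈ Finset.univ.filter
                (fun c => (if c ∈ I then φ c else σ₂ c) = i), s c := by
          rw [regroup p (fun j => f (σs j)) _ i]
          refine Finset.sum_congr rfl fun c _ => ?_
          rw [show bagSize p (fun j => f (σs j)) c
              = ∑ b ∈ Finset.univ.filter (fun b => f b = c), β b from bagSize_comp p σs f c,
            hsdef]
        rw [hre]
        have hsplit : Finset.univ.filter (fun c => (if c ∈ I then φ c else σ₂ c) = i)
            = I.filter (fun c => φ c = i) ∪ Iᶜ.filter (fun c => σ₂ c = i) := by
          ext c
          simp only [Finset.mem_filter, Finset.mem_univ, true_and, Finset.mem_union,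
            Finset.mem_compl]
          by_cases hcI : c ∈ I
          · rw [if_pos hcI]
            constructor
            · intro hh; exact Or.inl ⟨hcI, hh⟩
            · rintro (⟨_, hh⟩ | ⟨hc, _⟩)
              · exact hh
              · exact absurd hcI hc
          · rw [if_neg hcI]
            constructor
            · intro hh; exact Or.inr ⟨hcI, hh⟩
            · rintro (⟨hc, _⟩ | ⟨_, hh⟩)
              · exact absurd hc hcI
              · exact hh
        have hdisj2 : Disjoint (I.filter (fun c => φ c = i))
            (Iᶜ.filter (fun c => σ₂ c = i)) := by
          rw [Finset.disjoint_left]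
          intro c hc1 hc2
          exact (Finset.mem_compl.1 (Finset.mem_of_mem_filter c hc2))
            (Finset.mem_of_mem_filter c hc1)
        rw [hsplit, Finset.sum_union hdisj2]
        have hgi := hφ i
        rw [hLdef] at hgi
        dsimp at hgi
        linarith
      calc scenarioCost p (fun j => f (σs j)) (k.1 + 1)
          ≤ makespan p (fun j => f (σs j)) (fun c => if c ∈ I then φ c else σ₂ c) :=
            scenarioCost_le_makespan _ _ _
        _ ≤ C + 3 * (ε * T) := hms
    calc expCost p q (fun j => f (σs j))
        ≤ ∑ k : Fin m, q k * (scenarioCost p σs (k.1 + 1) + 3 * (ε * T)) :=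
          Finset.sum_le_sum fun k _ => mul_le_mul_of_nonneg_left (hcost k) (hq k)
      _ = expCost p q σs + 3 * (ε * T) := by
          simp only [mul_add, Finset.sum_add_distrib, ← Finset.sum_mul, hq1, one_mul]
          rfl
      _ ≤ (1 + 3 * ε) * T := by
          have hOPT : expCost p q σs ≤ T := by rw [← hσs]; exact hT1
          nlinarith
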